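/- Comparison (path-crossing) lemma for last-passage increments: for x ≤ y in ℤ², (a) if the terminal point moves by e1, then I_{x,y} ≥ I_{x,y+e1} and J_{x,y} ≤ J_{x,y+e1}; (b) if the terminal point moves by e2, then I_{x,y} ≤ I_{x,y+e2} and J_{x,y} ≥ J_{x,y+e2}. -/

import Mathlib

open scoped BigOperators

/-- An up-right path of length `n` in `ℤ²`: each step is `e1 = (1,0)` or `e2 = (0,1)`. -/
def IsUpRight (n : ℕ) (π : ℕ → ℤ × ℤ) : Prop :=
  ∀ i < n, π (i + 1) = π i + (1, 0) ∨ π (i + 1) = π i + (0, 1)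

/-- The last-passage time `L_{x,y}(w)`: the supremum (a maximum over the finitely many
up-right paths from `x` to `y`, including both endpoints) of the path weight sums,
with value `⊥ = -∞` when `x ≤ y` fails (empty set of paths). -/
noncomputable def lpp (w : ℤ × ℤ → ℝ) (x y : ℤ × ℤ) : EReal :=
  sSup {s : EReal | ∃ n : ℕ, ∃ π : ℕ → ℤ × ℤ,
    π 0 = x ∧ π n = y ∧ IsUpRight n π ∧
    s = ((∑ i ∈ Finset.range (n + 1), w (π i) : ℝ) : EReal)}

/-- Increment with respect to the initial point: `I_{x,y} = L_{x,y} - L_{x+e1,y}`. -/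
noncomputable def incI (w : ℤ × ℤ → ℝ) (x y : ℤ × ℤ) : EReal :=
  lpp w x y - lpp w (x + (1, 0)) y

/-- Increment with respect to the initial point: `J_{x,y} = L_{x,y} - L_{x+e2,y}`. -/
noncomputable def incJ (w : ℤ × ℤ → ℝ) (x y : ℤ × ℤ) : EReal :=
  lpp w x y - lpp w (x + (0, 1)) y

/-- Increment with respect to the terminal point: `Î_{x,y} = L_{x,y} - L_{x,y-e1}`. -/
noncomputable def incIhat (w : ℤ × ℤ → ℝ) (x y : ℤ × ℤ) : EReal :=
  lpp w x y - lpp w x (y - (1, 0))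

/-- Increment with respect to the terminal point: `Ĵ_{x,y} = L_{x,y} - L_{x,y-e2}`. -/
noncomputable def incJhat (w : ℤ × ℤ → ℝ) (x y : ℤ × ℤ) : EReal :=
  lpp w x y - lpp w x (y - (0, 1))

namespace StmtFourAux

lemma step_le {n : ℕ} {π : ℕ → ℤ×ℤ} (h : IsUpRight n π) {i : ℕ} (hi : i < n) :
    π i ≤ π (i+1) := by
  rcases h i hi with h' | h' <;> rw [h'] <;> simp [Prod.le_def]

lemma step_fst_le {n : ℕ} {π : ℕ → ℤ×ℤ} (h : IsUpRight n π) {i : ℕ} (hi : i < n) :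
    (π (i+1)).1 ≤ (π i).1 + 1 := by
  rcases h i hi with h' | h' <;> rw [h'] <;> simp

lemma step_snd_le {n : ℕ} {π : ℕ → ℤ×ℤ} (h : IsUpRight n π) {i : ℕ} (hi : i < n) :
    (π (i+1)).2 ≤ (π i).2 + 1 := by
  rcases h i hi with h' | h' <;> rw [h'] <;> simp

lemma step_level {n : ℕ} {π : ℕ → ℤ×ℤ} (h : IsUpRight n π) {i : ℕ} (hi : i < n) :
    (π (i+1)).1 + (π (i+1)).2 = (π i).1 + (π i).2 + 1 := by
  rcases h i hi with h' | h' <;> rw [h'] <;> simp <;> ring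

lemma mono {n : ℕ} {π : ℕ → ℤ×ℤ} (h : IsUpRight n π) {i j : ℕ}
    (hij : i ≤ j) (hj : j ≤ n) : π i ≤ π j := by
  induction j with
  | zero => simp_all
  | succ k ih =>
    rcases Nat.eq_or_lt_of_le hij with rfl | hlt
    · exact le_refl _
    · exact le_trans (ih (Nat.lt_succ_iff.mp hlt) (le_of_lt hj)) (step_le h hj)

lemma level {n : ℕ} {π : ℕ → ℤ×ℤ} (h : IsUpRight n π) {i : ℕ} (hi : i ≤ n) :
    (π i).1 + (π i).2 = (π 0).1 + (π 0).2 + i := by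
  induction i with
  | zero => simp
  | succ k ih =>
    rw [step_level h hi, ih (le_of_lt hi)]
    push_cast; ring

lemma exists_path : ∀ (k : ℕ) (x y : ℤ×ℤ), x ≤ y → (y.1 + y.2) - (x.1 + x.2) = k →
    ∃ n π, π 0 = x ∧ π n = y ∧ IsUpRight n π := by
  intro k
  induction k with
  | zero =>
    intro x y hxy h0
    have h1 : x.1 = y.1 ∧ x.2 = y.2 := by
      rcases Prod.le_def.mp hxy with ⟨ha, hb⟩; omega
    refine ⟨0, fun _ => x, rfl, ?_, fun i hi => absurd hi (by omega)⟩
    exact Prod.ext h1.1 h1.2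
  | succ k ih =>
    intro x y hxy h0
    rcases Prod.le_def.mp hxy with ⟨ha, hb⟩
    by_cases hc : x.1 < y.1
    · obtain ⟨n, π, hπ0, hπn, hπ⟩ := ih (x + (1,0)) y
        (Prod.le_def.mpr ⟨by simpa using hc, by simpa using hb⟩) (by simp; omega)
      refine ⟨n+1, fun i => if i = 0 then x else π (i-1), by simp, by simp [hπn], ?_⟩
      intro i hi
      rcases Nat.eq_zero_or_pos i with rfl | hpos
      · left; simpa [hπ0]
      · have h1 : i - 1 + 1 = i := by omega
        have := hπ (i-1) (by omega)
        simp only [Nat.add_eq_zero, if_neg (by omega : ¬ i + 1 = 0), if_neg (by omega : ¬ i = 0)]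
        simpa [h1] using this
    · have hc2 : x.2 < y.2 := by omega
      obtain ⟨n, π, hπ0, hπn, hπ⟩ := ih (x + (0,1)) y
        (Prod.le_def.mpr ⟨by simpa using ha, by simpa using hc2⟩) (by simp; omega)
      refine ⟨n+1, fun i => if i = 0 then x else π (i-1), by simp, by simp [hπn], ?_⟩
      intro i hi
      rcases Nat.eq_zero_or_pos i with rfl | hpos
      · right; simpa [hπ0]
      · have h1 : i - 1 + 1 = i := by omega
        have := hπ (i-1) (by omega)
        simp only [Nat.add_eq_zero, if_neg (by omega : ¬ i + 1 = 0), if_neg (by omega : ¬ i = 0)]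
        simpa [h1] using this

/-- The set of path sums is finite. -/
lemma pathSet_finite (w : ℤ×ℤ → ℝ) (x y : ℤ×ℤ) :
    {s : EReal | ∃ n : ℕ, ∃ π : ℕ → ℤ × ℤ,
      π 0 = x ∧ π n = y ∧ IsUpRight n π ∧
      s = ((∑ i ∈ Finset.range (n + 1), w (π i) : ℝ) : EReal)}.Finite := by
  set N : ℕ := ((y.1 + y.2) - (x.1 + x.2)).toNat with hN
  have hfin : {f : Fin (N+1) → ℤ×ℤ | ∀ i, f i ∈ Set.Icc x y}.Finite := by
    have := Set.Finite.pi (fun _ : Fin (N+1) => Set.finite_Icc x y)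
    convert this using 1; ext f; simp [Set.mem_pi, Set.mem_Icc, Pi.le_def, forall_and]
  apply Set.Finite.subset (hfin.image
    (fun f : Fin (N+1) → ℤ×ℤ => ((∑ i, w (f i) : ℝ) : EReal)))
  rintro s ⟨n, π, h0, hn, hur, rfl⟩
  have hlev := level hur (le_refl n)
  rw [h0, hn] at hlev
  have hxy : x ≤ y := by rw [← h0, ← hn]; exact mono hur (Nat.zero_le n) (le_refl n)
  have hnN : n = N := by
    have : ((y.1 + y.2) - (x.1 + x.2)) = (n : ℤ) := by omega
    omega
  subst hnN
  refine ⟨fun i => π i, fun i => ?_, ?_⟩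
  · refine Set.mem_Icc.mpr ⟨?_, ?_⟩
    · rw [← h0]; exact mono hur (Nat.zero_le _) (Nat.le_of_lt_succ i.isLt)
    · rw [← hn]; exact mono hur (Nat.le_of_lt_succ i.isLt) (le_refl _)
  · show ((∑ i : Fin (N+1), w (π i) : ℝ) : EReal) = _
    congr 1
    exact Fin.sum_univ_eq_sum_range (fun i => w (π i)) (N+1)

lemma lpp_bot {w : ℤ×ℤ → ℝ} {x y : ℤ×ℤ} (h : ¬ x ≤ y) : lpp w x y = ⊥ := by
  rw [lpp]
  convert sSup_empty
  · rfl
  rw [Set.eq_empty_iff_forall_notMem]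
  rintro s ⟨n, π, h0, hn, hur, rfl⟩
  exact h (h0 ▸ hn ▸ mono hur (Nat.zero_le n) (le_refl n))

lemma le_lpp {w : ℤ×ℤ → ℝ} {x y : ℤ×ℤ} {n : ℕ} {π : ℕ → ℤ×ℤ}
    (h0 : π 0 = x) (hn : π n = y) (hur : IsUpRight n π) :
    ((∑ i ∈ Finset.range (n + 1), w (π i) : ℝ) : EReal) ≤ lpp w x y :=
  le_sSup ⟨n, π, h0, hn, hur, rfl⟩

lemma lpp_attained (w : ℤ×ℤ → ℝ) {x y : ℤ×ℤ} (h : x ≤ y) :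
    ∃ (n : ℕ) (π : ℕ → ℤ×ℤ), π 0 = x ∧ π n = y ∧ IsUpRight n π ∧
      lpp w x y = ((∑ i ∈ Finset.range (n + 1), w (π i) : ℝ) : EReal) := by
  have hle : (x.1 + x.2) ≤ (y.1 + y.2) := by
    rcases Prod.le_def.mp h with ⟨h1, h2⟩; omega
  obtain ⟨n, π, h0, hn, hur⟩ := exists_path ((y.1 + y.2) - (x.1 + x.2)).toNat x y h
    (by rw [Int.toNat_of_nonneg]; omega)
  have hne : {s : EReal | ∃ n : ℕ, ∃ π : ℕ → ℤ × ℤ,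
      π 0 = x ∧ π n = y ∧ IsUpRight n π ∧
      s = ((∑ i ∈ Finset.range (n + 1), w (π i) : ℝ) : EReal)}.Nonempty :=
    ⟨_, n, π, h0, hn, hur, rfl⟩
  have := hne.csSup_mem (pathSet_finite w x y)
  obtain ⟨n', π', h0', hn', hur', heq⟩ := this
  exact ⟨n', π', h0', hn', hur', heq⟩

lemma lpp_real (w : ℤ×ℤ → ℝ) {x y : ℤ×ℤ} (h : x ≤ y) :
    ∃ r : ℝ, lpp w x y = (r : EReal) := by
  obtain ⟨n, π, _, _, _, heq⟩ := lpp_attained w h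
  exact ⟨_, heq⟩

/-- Splicing two paths at a common point. -/
lemma splice {m n i j : ℕ} {π σ : ℕ → ℤ×ℤ} (hπ : IsUpRight m π) (hσ : IsUpRight n σ)
    (hij : π i = σ j) (him : i ≤ m) (hjn : j ≤ n) (w : ℤ×ℤ → ℝ) :
    ∃ (L : ℕ) (τ : ℕ → ℤ×ℤ), τ 0 = π 0 ∧ τ L = σ n ∧ IsUpRight L τ ∧
      (∑ k ∈ Finset.range (L + 1), w (τ k)) =
        (∑ k ∈ Finset.range (i + 1), w (π k)) +
        ((∑ k ∈ Finset.range (n + 1), w (σ k)) - (∑ k ∈ Finset.range (j + 1), w (σ k))) := by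
  set τ : ℕ → ℤ×ℤ := fun k => if k ≤ i then π k else σ (k - i + j) with hτ
  refine ⟨i + (n - j), τ, by simp [hτ], ?_, ?_, ?_⟩
  · by_cases hc : i + (n - j) ≤ i
    · have hnj : n = j := by omega
      have h5 : i + (n - j) = i := by omega
      rw [h5]
      simp only [hτ]
      simp [hij, hnj]
    · simp only [hτ, if_neg hc]
      congr 1; omega
  · intro k hk
    by_cases h1 : k + 1 ≤ i
    · simp only [hτ, if_pos h1, if_pos (by omega : k ≤ i)]
      exact hπ k (by omega)
    · by_cases h2 : k ≤ i
      · have hki : k = i := by omega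
        have hjlt : j < n := by omega
        have e1 : τ (k+1) = σ (j+1) := by
          simp only [hτ]; rw [if_neg h1]; congr 1; omega
        have e2 : τ k = σ j := by
          simp only [hτ]; rw [if_pos h2, hki, hij]
        rw [e1, e2]; exact hσ j hjlt
      · have h3 : k + 1 - i + j = (k - i + j) + 1 := by omega
        simp only [hτ, if_neg h1, if_neg h2, h3]
        exact hσ (k - i + j) (by omega)
  · have hsplit : i + (n - j) + 1 = (i + 1) + (n - j) := by omega
    rw [hsplit, Finset.sum_range_add]
    have h4 := Finset.sum_range_add (fun k => w (σ k)) (j+1) (n-j)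
    have hsp2 : (j + 1) + (n - j) = n + 1 := by omega
    rw [hsp2] at h4
    congr 1
    · apply Finset.sum_congr rfl
      intro k hk
      simp only [Finset.mem_range] at hk
      simp only [hτ, if_pos (by omega : k ≤ i)]
    · rw [h4, add_sub_cancel_left]
      apply Finset.sum_congr rfl
      intro k hk
      have ha : i + 1 + k - i + j = j + 1 + k := by omega
      simp only [hτ, if_neg (by omega : ¬ i + 1 + k ≤ i), ha]

lemma cross_core (w : ℤ×ℤ → ℝ) (u u' V1 V2 : ℤ×ℤ)
    (h1 : u ≤ V1) (h2 : u' ≤ V2)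
    (hint : ∀ (m n : ℕ) (π σ : ℕ → ℤ×ℤ), IsUpRight m π → π 0 = u → π m = V1 →
      IsUpRight n σ → σ 0 = u' → σ n = V2 → ∃ i j, i ≤ m ∧ j ≤ n ∧ π i = σ j) :
    lpp w u V1 + lpp w u' V2 ≤ lpp w u V2 + lpp w u' V1 := by
  obtain ⟨m, π, hπ0, hπm, hπ, hA⟩ := lpp_attained w h1
  obtain ⟨n, σ, hσ0, hσn, hσ, hB⟩ := lpp_attained w h2
  obtain ⟨i, j, him, hjn, hij⟩ := hint m n π σ hπ hπ0 hπm hσ hσ0 hσn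
  obtain ⟨L1, τ1, hτ10, hτ1L, hτ1, hs1⟩ := splice hπ hσ hij him hjn w
  obtain ⟨L2, τ2, hτ20, hτ2L, hτ2, hs2⟩ := splice hσ hπ hij.symm hjn him w
  have k1 : ((∑ k ∈ Finset.range (L1+1), w (τ1 k) : ℝ) : EReal) ≤ lpp w u V2 :=
    le_lpp (by rw [hτ10, hπ0]) (by rw [hτ1L, hσn]) hτ1
  have k2 : ((∑ k ∈ Finset.range (L2+1), w (τ2 k) : ℝ) : EReal) ≤ lpp w u' V1 :=
    le_lpp (by rw [hτ20, hσ0]) (by rw [hτ2L, hπm]) hτ2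
  rw [hA, hB, ← EReal.coe_add]
  have hsum : (∑ k ∈ Finset.range (m+1), w (π k)) + (∑ k ∈ Finset.range (n+1), w (σ k))
      = (∑ k ∈ Finset.range (L1+1), w (τ1 k)) + (∑ k ∈ Finset.range (L2+1), w (τ2 k)) := by
    rw [hs1, hs2]; ring
  rw [hsum, EReal.coe_add]
  exact add_le_add k1 k2

lemma ivt : ∀ (K : ℕ) (F : ℕ → ℤ), (∀ k < K, F (k+1) ≤ F k + 1 ∧ F k ≤ F (k+1) + 1) →
    F 0 ≤ 0 → 0 ≤ F K → ∃ k ≤ K, F k = 0 := by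
  intro K
  induction K with
  | zero => intro F _ h0 hK; exact ⟨0, le_refl 0, le_antisymm h0 hK⟩
  | succ K ih =>
    intro F hstep h0 hK
    by_cases h : F 0 = 0
    · exact ⟨0, Nat.zero_le _, h⟩
    · have h1 : F 1 ≤ 0 := by
        have := (hstep 0 (Nat.succ_pos K)).1
        simp only [Nat.zero_add] at this
        omega
      obtain ⟨k, hk, hzero⟩ := ih (fun k => F (k+1))
        (fun k hk => hstep (k+1) (by omega)) h1 hK
      exact ⟨k+1, by omega, hzero⟩

/-- Any path `x → y + e1` meets any path `x + e1 → y`. -/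
lemma intersect1 (x y : ℤ×ℤ) (hx : x + (1,0) ≤ y) :
    ∀ (m n : ℕ) (π σ : ℕ → ℤ×ℤ), IsUpRight m π → π 0 = x → π m = y + (1,0) →
      IsUpRight n σ → σ 0 = x + (1,0) → σ n = y → ∃ i j, i ≤ m ∧ j ≤ n ∧ π i = σ j := by
  intro m n π σ hπ hπ0 hπm hσ hσ0 hσn
  rcases Prod.le_def.mp hx with ⟨hx1, hx2⟩
  simp only [Prod.fst_add, Prod.snd_add] at hx1 hx2
  have hlevπ := level hπ (le_refl m)
  rw [hπ0, hπm] at hlevπ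
  simp only [Prod.fst_add, Prod.snd_add] at hlevπ
  have hlevσ := level hσ (le_refl n)
  rw [hσ0, hσn] at hlevσ
  simp only [Prod.fst_add, Prod.snd_add] at hlevσ
  have hmn : m = n + 2 := by omega
  have hF : ∃ k ≤ n, (π (k+1)).1 - (σ k).1 = 0 := by
    apply ivt n (fun k => (π (k+1)).1 - (σ k).1)
    · intro k hk
      have b1 := step_fst_le hπ (by omega : k + 1 < m)
      have b2 := (step_le hπ (by omega : k + 1 < m)).1
      have b3 := step_fst_le hσ (by omega : k < n)
      have b4 := (step_le hσ (by omega : k < n)).1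
      constructor <;> omega
    · have b1 := step_fst_le hπ (by omega : 0 < m)
      rw [hπ0] at b1
      rw [hσ0]
      simp only [Prod.fst_add]
      omega
    · have b1 := step_fst_le hπ (by omega : n + 1 < m)
      have hidx : n + 1 + 1 = m := by omega
      rw [hidx, hπm] at b1
      rw [hσn]
      simp only [Prod.fst_add] at b1
      omega
  obtain ⟨k, hk, hzero⟩ := hF
  refine ⟨k+1, k, by omega, hk, ?_⟩
  have l1 := level hπ (by omega : k + 1 ≤ m)
  have l2 := level hσ (by omega : k ≤ n)
  rw [hπ0] at l1
  rw [hσ0] at l2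
  simp only [Prod.fst_add, Prod.snd_add] at l2
  have h1 : (π (k+1)).1 = (σ k).1 := by omega
  have h2 : (π (k+1)).2 = (σ k).2 := by omega
  exact Prod.ext h1 h2

/-- Any path `x → y` meets any path `x + e2 → y + e1`. -/
lemma intersect2 (x y : ℤ×ℤ) (hx : x + (0,1) ≤ y) :
    ∀ (m n : ℕ) (π σ : ℕ → ℤ×ℤ), IsUpRight m π → π 0 = x → π m = y →
      IsUpRight n σ → σ 0 = x + (0,1) → σ n = y + (1,0) →
      ∃ i j, i ≤ m ∧ j ≤ n ∧ π i = σ j := by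
  intro m n π σ hπ hπ0 hπm hσ hσ0 hσn
  rcases Prod.le_def.mp hx with ⟨hx1, hx2⟩
  simp only [Prod.fst_add, Prod.snd_add] at hx1 hx2
  have hlevπ := level hπ (le_refl m)
  rw [hπ0, hπm] at hlevπ
  have hlevσ := level hσ (le_refl n)
  rw [hσ0, hσn] at hlevσ
  simp only [Prod.fst_add, Prod.snd_add] at hlevσ
  have hmn : n = m := by omega
  have hm1 : 1 ≤ m := by omega
  have hF : ∃ k ≤ m - 1, (π (k+1)).2 - (σ k).2 = 0 := by
    apply ivt (m-1) (fun k => (π (k+1)).2 - (σ k).2)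
    · intro k hk
      have b1 := step_snd_le hπ (by omega : k + 1 < m)
      have b2 := (step_le hπ (by omega : k + 1 < m)).2
      have b3 := step_snd_le hσ (by omega : k < n)
      have b4 := (step_le hσ (by omega : k < n)).2
      constructor <;> omega
    · have b1 := step_snd_le hπ (by omega : 0 < m)
      rw [hπ0] at b1
      rw [hσ0]
      simp only [Prod.snd_add]
      omega
    · have hidx : m - 1 + 1 = m := by omega
      have b1 := (mono hσ (by omega : m - 1 ≤ n) (le_refl n)).2
      rw [hσn] at b1
      simp only [Prod.snd_add] at b1
      rw [hidx, hπm]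
      omega
  obtain ⟨k, hk, hzero⟩ := hF
  refine ⟨k+1, k, by omega, by omega, ?_⟩
  have l1 := level hπ (by omega : k + 1 ≤ m)
  have l2 := level hσ (by omega : k ≤ n)
  rw [hπ0] at l1
  rw [hσ0] at l2
  simp only [Prod.fst_add, Prod.snd_add] at l2
  have h1 : (π (k+1)).1 = (σ k).1 := by omega
  have h2 : (π (k+1)).2 = (σ k).2 := by omega
  exact Prod.ext h1 h2

/-- Part (a) of the comparison lemma. -/
lemma partA (w : ℤ×ℤ → ℝ) (x y : ℤ×ℤ) (hxy : x ≤ y) :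
    incI w x (y + (1, 0)) ≤ incI w x y ∧ incJ w x y ≤ incJ w x (y + (1, 0)) := by
  rcases Prod.le_def.mp hxy with ⟨hx1, hx2⟩
  have hy1 : y ≤ y + (1,0) := by simp [Prod.le_def]
  have hxy1 : x ≤ y + (1,0) := le_trans hxy hy1
  constructor
  · by_cases h : x + (1,0) ≤ y
    · have hb' : x + (1,0) ≤ y + (1,0) := by
        simp only [Prod.le_def, Prod.fst_add, Prod.snd_add] at h ⊢
        omega
      have hcross := cross_core w x (x+(1,0)) (y+(1,0)) y hxy1 h (intersect1 x y h)
      obtain ⟨a, ha⟩ := lpp_real w hxy1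
      obtain ⟨b, hb⟩ := lpp_real w hb'
      obtain ⟨c, hc⟩ := lpp_real w hxy
      obtain ⟨d, hd⟩ := lpp_real w h
      rw [ha, hb, hc, hd, ← EReal.coe_add, ← EReal.coe_add] at hcross
      have hr : a + d ≤ c + b := by exact_mod_cast hcross
      rw [incI, incI, ha, hb, hc, hd, ← EReal.coe_sub, ← EReal.coe_sub]
      exact_mod_cast (by linarith : a - b ≤ c - d)
    · have htop : incI w x y = ⊤ := by
        obtain ⟨c, hc⟩ := lpp_real w hxy
        rw [incI, lpp_bot h, hc]
        simp [sub_eq_add_neg]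
      rw [htop]; exact le_top
  · by_cases h : x + (0,1) ≤ y
    · have hb' : x + (0,1) ≤ y + (1,0) := by
        simp only [Prod.le_def, Prod.fst_add, Prod.snd_add] at h ⊢
        omega
      have hcross := cross_core w x (x+(0,1)) y (y+(1,0)) hxy hb' (intersect2 x y h)
      obtain ⟨a, ha⟩ := lpp_real w hxy1
      obtain ⟨b, hb⟩ := lpp_real w hb'
      obtain ⟨c, hc⟩ := lpp_real w hxy
      obtain ⟨d, hd⟩ := lpp_real w h
      rw [ha, hb, hc, hd, ← EReal.coe_add, ← EReal.coe_add] at hcross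
      have hr : c + b ≤ a + d := by exact_mod_cast hcross
      rw [incJ, incJ, ha, hb, hc, hd, ← EReal.coe_sub, ← EReal.coe_sub]
      exact_mod_cast (by linarith : c - d ≤ a - b)
    · have h2 : ¬ (x + (0,1) ≤ y + (1,0)) := by
        simp only [Prod.le_def, Prod.fst_add, Prod.snd_add] at h ⊢
        omega
      have t1 : incJ w x y = ⊤ := by
        obtain ⟨c, hc⟩ := lpp_real w hxy
        rw [incJ, lpp_bot h, hc]
        simp [sub_eq_add_neg]
      have t2 : incJ w x (y + (1,0)) = ⊤ := by
        obtain ⟨a, ha⟩ := lpp_real w hxy1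
        rw [incJ, lpp_bot h2, ha]
        simp [sub_eq_add_neg]
      rw [t1, t2]

lemma lpp_swap_le (w : ℤ×ℤ → ℝ) (x y : ℤ×ℤ) :
    lpp w x y ≤ lpp (fun p => w p.swap) x.swap y.swap := by
  apply sSup_le_sSup
  rintro s ⟨n, π, h0, hn, hur, rfl⟩
  refine ⟨n, fun i => (π i).swap, by simp [h0], by simp [hn], ?_, by simp⟩
  intro i hi
  rcases hur i hi with h | h
  · right; simp only [h]; ext <;> simp
  · left; simp only [h]; ext <;> simp

lemma lpp_swap (w : ℤ×ℤ → ℝ) (x y : ℤ×ℤ) :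
    lpp (fun p => w p.swap) x.swap y.swap = lpp w x y := by
  apply le_antisymm
  · have := lpp_swap_le (fun p => w p.swap) x.swap y.swap
    simpa using this
  · exact lpp_swap_le w x y

lemma incI_swap (w : ℤ×ℤ → ℝ) (x y : ℤ×ℤ) :
    incI (fun p => w p.swap) x.swap y.swap = incJ w x y := by
  rw [incI, incJ, lpp_swap]
  have hx : x.swap + (1,0) = (x + (0,1)).swap := by ext <;> simp
  rw [hx, lpp_swap]

lemma incJ_swap (w : ℤ×ℤ → ℝ) (x y : ℤ×ℤ) :
    incJ (fun p => w p.swap) x.swap y.swap = incI w x y := by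
  rw [incJ, incI, lpp_swap]
  have hx : x.swap + (0,1) = (x + (1,0)).swap := by ext <;> simp
  rw [hx, lpp_swap]

end StmtFourAux

/-- Comparison (path-crossing) lemma for increments with respect to the initial point:
for `x ≤ y`, moving the terminal point by `e1` decreases `I` and increases `J`, and
moving it by `e2` increases `I` and decreases `J` (inequalities in the extended reals). -/
theorem stmt4 (w : ℤ × ℤ → ℝ) (x y : ℤ × ℤ) (hxy : x ≤ y) :
    (incI w x (y + (1, 0)) ≤ incI w x y ∧ incJ w x y ≤ incJ w x (y + (1, 0))) ∧
    (incI w x y ≤ incI w x (y + (0, 1)) ∧ incJ w x (y + (0, 1)) ≤ incJ w x y) := by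
  refine ⟨StmtFourAux.partA w x y hxy, ?_, ?_⟩
  · have hsw := StmtFourAux.partA (fun p => w p.swap) x.swap y.swap
      (Prod.le_def.mpr ⟨(Prod.le_def.mp hxy).2, (Prod.le_def.mp hxy).1⟩)
    have e1 : y.swap + (1,0) = (y + (0,1)).swap := by ext <;> simp
    rw [e1, StmtFourAux.incJ_swap, StmtFourAux.incJ_swap] at hsw
    exact hsw.2
  · have hsw := StmtFourAux.partA (fun p => w p.swap) x.swap y.swap
      (Prod.le_def.mpr ⟨(Prod.le_def.mp hxy).2, (Prod.le_def.mp hxy).1⟩)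
    have e1 : y.swap + (1,0) = (y + (0,1)).swap := by ext <;> simp
    rw [e1, StmtFourAux.incI_swap, StmtFourAux.incI_swap] at hsw
    exact hsw.1
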